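/- Let S be a commutative Poisson algebra and f_1,...,f_n Poisson central elements forming a regular sequence, generating ideal I. Then the induced Poisson module structure on I^k/I^{k+1} over S/I decomposes as a direct sum of copies of S/I indexed by monomials f_1^{m_1}···f_n^{m_n} of total degree k, and for a Poisson central element h ∈ I^k of S, each coefficient of its image in I^k/I^{k+1} with respect to this basis is Poisson central in S/I. -/

import Mathlib

open Finset RingTheory.Sequence

namespace QuasiRegAux

variable {S : Type*} [CommRing S]


variable {S : Type*} [CommRing S]

lemma prod_pow_single_add {n : ℕ} (f : Fin n → S) (m : Fin n → ℕ) (i : Fin n) :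
    (∏ j, f j ^ (m + (Pi.single i 1 : Fin n → ℕ)) j) = (∏ j, f j ^ m j) * f i := by
  have h1 : (∏ j, f j ^ (Pi.single i 1 : Fin n → ℕ) j) = f i := by
    rw [Finset.prod_eq_single i]
    · simp
    · intro j _ hj; rw [Pi.single_eq_of_ne hj, pow_zero]
    · simp
  calc (∏ j, f j ^ (m + (Pi.single i 1 : Fin n → ℕ)) j)
      = ∏ j, (f j ^ m j * f j ^ (Pi.single i 1 : Fin n → ℕ) j) := by
        apply Finset.prod_congr rfl; intro j _; rw [Pi.add_apply, pow_add]
    _ = (∏ j, f j ^ m j) * ∏ j, f j ^ (Pi.single i 1 : Fin n → ℕ) j := Finset.prod_mul_distrib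
    _ = (∏ j, f j ^ m j) * f i := by rw [h1]

lemma sum_single_add {n : ℕ} (m : Fin n → ℕ) (i : Fin n) :
    (∑ j, (m + (Pi.single i 1 : Fin n → ℕ)) j) = (∑ j, m j) + 1 := by
  simp only [Pi.add_apply]
  rw [Finset.sum_add_distrib, Finset.sum_pi_single']
  simp

lemma monomial_mem {n : ℕ} (f : Fin n → S) (m : Fin n → ℕ) :
    (∏ i, f i ^ m i) ∈ (Ideal.span (Set.range f)) ^ (∑ i, m i) := by
  rw [← prod_pow_eq_pow_sum]
  exact Ideal.prod_mem_prod fun i _ =>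
    Ideal.pow_mem_pow (Ideal.subset_span (Set.mem_range_self i)) _

lemma monomial_mem' {n K : ℕ} (f : Fin n → S) {m : Fin n → ℕ}
    (hm : m ∈ Finset.Nat.antidiagonalTuple n K) :
    (∏ i, f i ^ m i) ∈ (Ideal.span (Set.range f)) ^ K := by
  have := monomial_mem f m
  rwa [Finset.Nat.mem_antidiagonalTuple.mp hm] at this

lemma sum_mem_pow {n K : ℕ} (f : Fin n → S) (c : (Fin n → ℕ) → S) :
    (∑ m ∈ Finset.Nat.antidiagonalTuple n K, c m * ∏ i, f i ^ m i)
      ∈ (Ideal.span (Set.range f)) ^ K :=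
  Submodule.sum_mem _ fun m hm => Ideal.mul_mem_left _ _ (monomial_mem' f hm)

lemma span_pow_eq {n : ℕ} (f : Fin n → S) (K : ℕ) :
    (Ideal.span (Set.range f)) ^ K =
      Ideal.span ((fun m : Fin n → ℕ => ∏ i, f i ^ m i) ''
        (Finset.Nat.antidiagonalTuple n K : Set _)) := by
  induction K with
  | zero =>
      rw [pow_zero, Finset.Nat.antidiagonalTuple_zero_right, Finset.coe_singleton,
        Set.image_singleton]
      simp [Ideal.one_eq_top, Ideal.span_singleton_one]
  | succ K IH =>
      rw [pow_succ, IH, Ideal.span_mul_span']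
      congr 1
      ext x
      constructor
      · rintro ⟨a, ⟨m, hm, rfl⟩, b, ⟨i, rfl⟩, rfl⟩
        refine ⟨m + (Pi.single i 1 : Fin n → ℕ), ?_, ?_⟩
        swap
        · show (∏ j, f j ^ (m + (Pi.single i 1 : Fin n → ℕ)) j) = (∏ j, f j ^ m j) * f i
          exact prod_pow_single_add f m i
        rw [Finset.mem_coe, Finset.Nat.mem_antidiagonalTuple] at hm ⊢
        rw [sum_single_add, hm]
      · rintro ⟨m', hm', rfl⟩
        rw [Finset.mem_coe, Finset.Nat.mem_antidiagonalTuple] at hm'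
        have hne : ∃ i, m' i ≠ 0 := by
          by_contra hall
          push_neg at hall
          simp only [hall, Finset.sum_const_zero] at hm'
          omega
        obtain ⟨i, hi⟩ := hne
        set μ : Fin n → ℕ := fun j => m' j - (Pi.single i 1 : Fin n → ℕ) j with hμ
        have hadd : μ + (Pi.single i 1 : Fin n → ℕ) = m' := by
          funext j
          by_cases hj : j = i
          · subst hj
            simp only [hμ, Pi.add_apply, Pi.single_eq_same]
            omega
          · simp [hμ, Pi.single_eq_of_ne hj]
        have hμmem : μ ∈ Finset.Nat.antidiagonalTuple n K := by
          rw [Finset.Nat.mem_antidiagonalTuple]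
          have h2 := sum_single_add μ i
          rw [hadd, hm'] at h2
          omega
        refine ⟨∏ j, f j ^ μ j, ⟨μ, hμmem, rfl⟩, f i, ⟨i, rfl⟩, ?_⟩
        show (∏ j, f j ^ μ j) * f i = ∏ j, f j ^ m' j
        rw [← hadd, prod_pow_single_add]

lemma repr_of_mem_span_image {α : Type*} (s : Finset α) (g : α → S) {x : S}
    (h : x ∈ Ideal.span (g '' (s : Set α))) : ∃ c : α → S, x = ∑ a ∈ s, c a * g a := by
  rw [← Ideal.submodule_span_eq, Finsupp.mem_span_image_iff_linearCombination] at h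
  obtain ⟨l, hl, rfl⟩ := h
  rw [Finsupp.mem_supported] at hl
  have hsub : l.support ⊆ s := fun a ha => Finset.mem_coe.mp (hl ha)
  refine ⟨l, ?_⟩
  rw [Finsupp.linearCombination_apply, Finsupp.sum]
  rw [Finset.sum_subset hsub
    (fun a _ ha => by rw [Finsupp.notMem_support_iff.mp ha, zero_smul])]
  simp [smul_eq_mul]

lemma pow_repr {n K : ℕ} (f : Fin n → S) {x : S}
    (h : x ∈ (Ideal.span (Set.range f)) ^ K) :
    ∃ c : (Fin n → ℕ) → S,
      x = ∑ m ∈ Finset.Nat.antidiagonalTuple n K, c m * ∏ i, f i ^ m i := by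
  rw [span_pow_eq] at h
  exact repr_of_mem_span_image _ _ h


variable {S : Type*} [CommRing S]

lemma snoc_add_single {n : ℕ} (μ : Fin n → ℕ) (j : ℕ) :
    (Fin.snoc μ j : Fin (n+1) → ℕ) + (Pi.single (Fin.last n) 1 : Fin (n+1) → ℕ)
      = Fin.snoc μ (j+1) := by
  funext i
  refine Fin.lastCases ?_ ?_ i
  · simp [Fin.snoc_last, Pi.single_eq_same]
  · intro i'
    have hne : (Fin.castSucc i' : Fin (n+1)) ≠ Fin.last n := (Fin.castSucc_lt_last i').ne
    simp [Fin.snoc_castSucc, Pi.single_eq_of_ne hne]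

lemma snoc_sum_split {n : ℕ} (f : Fin (n+1) → S) (K : ℕ) (c : (Fin (n+1) → ℕ) → S) :
    ∑ m ∈ Finset.Nat.antidiagonalTuple (n+1) K, c m * ∏ i, f i ^ m i
      = ∑ j ∈ Finset.range (K+1), f (Fin.last n) ^ j *
          ∑ μ ∈ Finset.Nat.antidiagonalTuple n (K - j),
            c (Fin.snoc μ j) * ∏ i, f (Fin.castSucc i) ^ μ i := by
  have hrhs : ∀ j ∈ Finset.range (K+1),
      f (Fin.last n) ^ j * ∑ μ ∈ Finset.Nat.antidiagonalTuple n (K - j),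
          c (Fin.snoc μ j) * ∏ i, f (Fin.castSucc i) ^ μ i
        = ∑ μ ∈ Finset.Nat.antidiagonalTuple n (K - j),
            c (Fin.snoc μ j) * ((∏ i, f (Fin.castSucc i) ^ μ i) * f (Fin.last n) ^ j) := by
    intro j _
    rw [Finset.mul_sum]
    apply Finset.sum_congr rfl
    intro μ _
    ring
  rw [Finset.sum_congr rfl hrhs, Finset.sum_sigma']
  refine Finset.sum_bij' (fun m _ => ⟨m (Fin.last n), Fin.init m⟩)
    (fun p _ => Fin.snoc p.2 p.1) ?_ ?_ ?_ ?_ ?_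
  · intro m hm
    rw [Finset.Nat.mem_antidiagonalTuple] at hm
    rw [Fin.sum_univ_castSucc] at hm
    show (⟨m (Fin.last n), Fin.init m⟩ : Σ _ : ℕ, (Fin n → ℕ)) ∈
      (Finset.range (K+1)).sigma (fun j => Finset.Nat.antidiagonalTuple n (K - j))
    rw [Finset.mem_sigma]
    refine ⟨Finset.mem_range.mpr ?_, ?_⟩
    · show m (Fin.last n) < K + 1
      omega
    · rw [Finset.Nat.mem_antidiagonalTuple]
      show (∑ i : Fin n, m (Fin.castSucc i)) = K - m (Fin.last n)
      omega
  · rintro ⟨j, μ⟩ hp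
    rw [Finset.mem_sigma] at hp
    obtain ⟨hj, hμ⟩ := hp
    dsimp only at hj hμ
    rw [Finset.mem_range] at hj
    rw [Finset.Nat.mem_antidiagonalTuple] at hμ ⊢
    show (∑ i : Fin (n+1), (Fin.snoc μ j : Fin (n+1) → ℕ) i) = K
    rw [Fin.sum_univ_castSucc]
    simp only [Fin.snoc_castSucc, Fin.snoc_last]
    omega
  · intro m _
    exact Fin.snoc_init_self m
  · rintro ⟨j, μ⟩ _
    refine Sigma.ext ?_ ?_
    · simp [Fin.snoc_last]
    · simp only [Fin.snoc_last]
      refine heq_of_eq ?_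
      funext i
      simp [Fin.init, Fin.snoc_castSucc]
  · intro m hm
    conv_lhs => rw [← Fin.snoc_init_self m]
    show c _ * ∏ i : Fin (n+1), f i ^ (Fin.snoc (Fin.init m) (m (Fin.last n)) : Fin (n+1) → ℕ) i = _
    rw [Fin.prod_univ_castSucc]
    simp only [Fin.snoc_castSucc, Fin.snoc_last]


variable {S : Type*} [CommRing S]

lemma ofList_ofFn_eq {n : ℕ} (f : Fin n → S) :
    Ideal.ofList (List.ofFn f) = Ideal.span (Set.range f) :=
  congrArg Ideal.span (Set.ext fun a => List.mem_ofFn)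

lemma ofFn_split {n : ℕ} (f : Fin (n+1) → S) :
    List.ofFn f = (List.ofFn fun i : Fin n => f i.castSucc) ++ [f (Fin.last n)] := by
  rw [List.ofFn_succ', List.concat_eq_append]

lemma weak_init {n : ℕ} (f : Fin (n+1) → S) (h : IsWeaklyRegular S (List.ofFn f)) :
    IsWeaklyRegular S (List.ofFn fun i : Fin n => f i.castSucc) := by
  rw [isWeaklyRegular_iff] at h ⊢
  intro i hi
  have hlen : (List.ofFn fun i : Fin n => f i.castSucc).length = n := by simp
  have hi' : i < (List.ofFn f).length := by
    simp only [List.length_ofFn] at hi ⊢; omega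
  have h1 := h i hi'
  have e1 : List.take i (List.ofFn f) = List.take i (List.ofFn fun i : Fin n => f i.castSucc) := by
    rw [ofFn_split f, List.take_append_of_le_length (by simp only [List.length_ofFn]; omega)]
  rw [e1] at h1
  have e2 : (List.ofFn f)[i]'hi' = (List.ofFn fun i : Fin n => f i.castSucc)[i]'hi := by
    rw [List.getElem_ofFn, List.getElem_ofFn]
    exact congrArg f (Fin.ext rfl)
  rw [e2] at h1
  exact h1

lemma last_reg {n : ℕ} (f : Fin (n+1) → S) (h : IsWeaklyRegular S (List.ofFn f)) :
    ∀ x : S, f (Fin.last n) * x ∈ Ideal.span (Set.range fun i : Fin n => f i.castSucc) →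
      x ∈ Ideal.span (Set.range fun i : Fin n => f i.castSucc) := by
  set J : Ideal S := Ideal.span (Set.range fun i : Fin n => f i.castSucc) with hJ
  have hJT : (J • ⊤ : Submodule S S) = J := by rw [smul_eq_mul, Ideal.mul_top]
  have hn : n < (List.ofFn f).length := by simp
  have h1 := (isWeaklyRegular_iff S (List.ofFn f)).mp h n hn
  have htake : (List.ofFn f).take n = List.ofFn fun i : Fin n => f i.castSucc := by
    rw [ofFn_split f, List.take_append_of_le_length (by simp), List.take_of_length_le (by simp)]
  have hget : (List.ofFn f)[n]'hn = f (Fin.last n) := by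
    rw [List.getElem_ofFn]
    exact congrArg f (Fin.ext rfl)
  rw [htake, hget, ofList_ofFn_eq, ← hJ] at h1
  intro x hx
  have hmk : f (Fin.last n) • (Submodule.Quotient.mk x : S ⧸ (J • ⊤ : Submodule S S))
      = f (Fin.last n) • (0 : S ⧸ (J • ⊤ : Submodule S S)) := by
    rw [smul_zero, ← Submodule.Quotient.mk_smul, Submodule.Quotient.mk_eq_zero]
    rw [hJT]
    exact hx
  have := h1 hmk
  rw [Submodule.Quotient.mk_eq_zero, hJT] at this
  exact this


theorem quasiReg : ∀ (n : ℕ) (f : Fin n → S), IsWeaklyRegular S (List.ofFn f) →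
    ∀ (K : ℕ) (c : (Fin n → ℕ) → S),
      (∑ m ∈ Finset.Nat.antidiagonalTuple n K, c m * ∏ i, f i ^ m i)
        ∈ (Ideal.span (Set.range f)) ^ (K + 1) →
      ∀ m ∈ Finset.Nat.antidiagonalTuple n K, c m ∈ Ideal.span (Set.range f) := by
  intro n
  induction n with
  | zero =>
      intro f _ K c hc m hm
      have hK : K = 0 := by
        have := Finset.Nat.mem_antidiagonalTuple.mp hm
        simpa using this.symm
      subst hK
      have hm0 : m = 0 := by
        rw [Finset.Nat.antidiagonalTuple_zero_right] at hm
        exact Finset.mem_singleton.mp hm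
      subst hm0
      rw [Finset.Nat.antidiagonalTuple_zero_right, Finset.sum_singleton] at hc
      simpa using hc
  | succ n IH =>
      intro f hf
      set g : S := f (Fin.last n) with hgd
      set f' : Fin n → S := fun i => f i.castSucc with hf'd
      set J : Ideal S := Ideal.span (Set.range f') with hJd
      set I : Ideal S := Ideal.span (Set.range f) with hId
      have hwf' : IsWeaklyRegular S (List.ofFn f') := weak_init f hf
      have hregJ : ∀ x : S, g * x ∈ J → x ∈ J := last_reg f hf
      have hJI : J ≤ I := by
        rw [hJd, hId]
        apply Ideal.span_mono
        rintro _ ⟨i, rfl⟩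
        exact ⟨i.castSucc, rfl⟩
      have hgI : g ∈ I := Ideal.subset_span ⟨Fin.last n, rfl⟩
      have L : ∀ (p : ℕ) (x : S), g * x ∈ J ^ p → x ∈ J ^ p := by
        intro p
        induction p with
        | zero => intro x _; simpa using Submodule.mem_top
        | succ p ihp =>
            intro x hx
            have hx' : x ∈ J ^ p := ihp x (Ideal.pow_le_pow_right (Nat.le_succ p) hx)
            obtain ⟨b, hb⟩ := pow_repr f' hx'
            have hgx : (∑ μ ∈ Finset.Nat.antidiagonalTuple n p, (g * b μ) * ∏ i, f' i ^ μ i)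
                ∈ J ^ (p + 1) := by
              have e : (∑ μ ∈ Finset.Nat.antidiagonalTuple n p, (g * b μ) * ∏ i, f' i ^ μ i)
                  = g * x := by
                rw [hb, Finset.mul_sum]
                apply Finset.sum_congr rfl
                intro μ _
                ring
              rw [e]
              exact hx
            have hbJ := IH f' hwf' p _ hgx
            rw [hb, pow_succ']
            exact Submodule.sum_mem _ fun μ hμ =>
              Ideal.mul_mem_mul (hregJ (b μ) (hbJ μ hμ)) (monomial_mem' f' hμ)
      have hsplit : ∀ (K' : ℕ) (u : (Fin (n+1) → ℕ) → S),
          ∑ mm ∈ Finset.Nat.antidiagonalTuple (n+1) K', u mm * ∏ i, f i ^ mm i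
            = (∑ μ ∈ Finset.Nat.antidiagonalTuple n K', u (Fin.snoc μ 0) * ∏ i, f' i ^ μ i)
              + g * ∑ j ∈ Finset.range K', g ^ j *
                  ∑ μ ∈ Finset.Nat.antidiagonalTuple n (K' - (j+1)),
                    u (Fin.snoc μ (j+1)) * ∏ i, f' i ^ μ i := by
        intro K' u
        rw [snoc_sum_split f K' u, Finset.sum_range_succ', add_comm]
        congr 1
        · simp [hf'd]
        · rw [Finset.mul_sum]
          apply Finset.sum_congr rfl
          intro j _
          rw [pow_succ', mul_assoc]
      intro K
      induction K using Nat.strong_induction_on with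
      | _ K IHK =>
      intro c hc m hm
      obtain ⟨d, hd⟩ := pow_repr f hc
      set T0 : S := ∑ μ ∈ Finset.Nat.antidiagonalTuple n K,
        c (Fin.snoc μ 0) * ∏ i, f' i ^ μ i with hT0d
      set R : S := ∑ j ∈ Finset.range K, g ^ j *
        ∑ μ ∈ Finset.Nat.antidiagonalTuple n (K - (j+1)),
          c (Fin.snoc μ (j+1)) * ∏ i, f' i ^ μ i with hRd
      set Y0 : S := ∑ μ ∈ Finset.Nat.antidiagonalTuple n (K+1),
        d (Fin.snoc μ 0) * ∏ i, f' i ^ μ i with hY0d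
      set Y1 : S := ∑ j ∈ Finset.range (K+1), g ^ j *
        ∑ μ ∈ Finset.Nat.antidiagonalTuple n (K + 1 - (j+1)),
          d (Fin.snoc μ (j+1)) * ∏ i, f' i ^ μ i with hY1d
      have hmain : T0 + g * R = Y0 + g * Y1 := by
        rw [hT0d, hRd, hY0d, hY1d]
        exact ((hsplit K c).symm.trans hd).trans (hsplit (K+1) d)
      have hT0 : T0 ∈ J ^ K := by
        rw [hT0d]; exact sum_mem_pow f' _
      have hY0K : Y0 ∈ J ^ (K + 1) := by
        rw [hY0d]; exact sum_mem_pow f' _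
      have hY1 : Y1 ∈ I ^ K := by
        rw [hY1d]
        apply Submodule.sum_mem
        intro j hj
        rw [Finset.mem_range] at hj
        have h2 : (∑ μ ∈ Finset.Nat.antidiagonalTuple n (K + 1 - (j+1)),
            d (Fin.snoc μ (j+1)) * ∏ i, f' i ^ μ i) ∈ J ^ (K + 1 - (j+1)) := sum_mem_pow f' _
        have h2' := Ideal.pow_right_mono hJI _ h2
        have h3 := Ideal.mul_mem_mul (Ideal.pow_mem_pow hgI j) h2'
        rw [← pow_add] at h3
        have e : j + (K + 1 - (j + 1)) = K := by omega
        rwa [e] at h3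
      have hsub : g * (Y1 - R) = T0 - Y0 := by linear_combination -hmain
      have hT0Y0 : T0 - Y0 ∈ J ^ K :=
        sub_mem hT0 (Ideal.pow_le_pow_right (Nat.le_succ K) hY0K)
      have hYR : Y1 - R ∈ J ^ K := by
        apply L K
        rw [hsub]
        exact hT0Y0
      obtain ⟨w, hw⟩ := pow_repr f' hYR
      have hT0eq : (∑ μ ∈ Finset.Nat.antidiagonalTuple n K,
          (c (Fin.snoc μ 0) - g * w μ) * ∏ i, f' i ^ μ i) ∈ J ^ (K + 1) := by
        have e1 : (∑ μ ∈ Finset.Nat.antidiagonalTuple n K,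
            (c (Fin.snoc μ 0) - g * w μ) * ∏ i, f' i ^ μ i) = T0 - g * (Y1 - R) := by
          rw [hT0d, hw, Finset.mul_sum, ← Finset.sum_sub_distrib]
          apply Finset.sum_congr rfl
          intro μ _
          ring
        have e2 : T0 - g * (Y1 - R) = Y0 := by rw [hsub]; ring
        rw [e1, e2, hY0d]
        exact sum_mem_pow f' _
      have hb := IH f' hwf' K _ hT0eq
      have hcoef0 : ∀ μ ∈ Finset.Nat.antidiagonalTuple n K, c (Fin.snoc μ 0) ∈ I := by
        intro μ hμ
        have h1 : c (Fin.snoc μ 0) - g * w μ ∈ I := hJI (hb μ hμ)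
        have h2 : g * w μ ∈ I := Ideal.mul_mem_right _ _ hgI
        have h3 := add_mem h1 h2
        simpa using h3
      have hsum := Finset.Nat.mem_antidiagonalTuple.mp hm
      rw [Fin.sum_univ_castSucc] at hsum
      rcases Nat.eq_zero_or_pos (m (Fin.last n)) with hzero | hpos
      · have hm0 : m = Fin.snoc (Fin.init m) 0 := by
          have e := Fin.snoc_init_self m
          rw [hzero] at e
          exact e.symm
        have hinit : Fin.init m ∈ Finset.Nat.antidiagonalTuple n K := by
          rw [Finset.Nat.mem_antidiagonalTuple]
          simp only [Fin.init]
          omega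
        rw [hm0]
        exact hcoef0 _ hinit
      · obtain ⟨j, h⟩ : ∃ j, m (Fin.last n) = j + 1 :=
          ⟨m (Fin.last n) - 1, by omega⟩
        obtain ⟨K', rfl⟩ : ∃ K', K = K' + 1 := ⟨K - 1, by omega⟩
        have hRI : R ∈ I ^ (K' + 1) := by
          have h1 : Y1 - (Y1 - R) = R := by ring
          rw [← h1]
          exact sub_mem hY1 (Ideal.pow_right_mono hJI _ hYR)
        have hReq : R = ∑ mm ∈ Finset.Nat.antidiagonalTuple (n+1) K',
            c (mm + (Pi.single (Fin.last n) 1 : Fin (n+1) → ℕ)) * ∏ i, f i ^ mm i := by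
          rw [hRd, snoc_sum_split f K' _]
          apply Finset.sum_congr rfl
          intro j' _
          congr 1
          refine Finset.sum_congr (by rw [Nat.succ_sub_succ]) ?_
          intro μ _
          rw [snoc_add_single]
        have hcoef1 := IHK K' (Nat.lt_succ_self K') _ (by rw [← hReq]; exact hRI)
        have hmt : (Fin.snoc (Fin.init m) j : Fin (n+1) → ℕ)
            ∈ Finset.Nat.antidiagonalTuple (n+1) K' := by
          rw [Finset.Nat.mem_antidiagonalTuple, Fin.sum_univ_castSucc]
          simp only [Fin.snoc_castSucc, Fin.snoc_last, Fin.init]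
          omega
        have h4 := hcoef1 _ hmt
        rw [snoc_add_single] at h4
        have hmsnoc : (Fin.snoc (Fin.init m) (j+1) : Fin (n+1) → ℕ) = m := by
          rw [← h]
          exact Fin.snoc_init_self m
        rwa [hmsnoc] at h4

end QuasiRegAux






/-- A Poisson bracket on a commutative algebra `S` over `k`: a `k`-bilinear Lie bracket
which is a derivation in each argument. -/
structure PoissonBracket (k S : Type*) [CommRing k] [CommRing S] [Algebra k S] where
  bracket : S → S → S
  add_left : ∀ a b c : S, bracket (a + b) c = bracket a c + bracket b c
  smul_left : ∀ (r : k) (a b : S), bracket (r • a) b = r • bracket a b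
  antisymm : ∀ a b : S, bracket a b = - bracket b a
  jacobi : ∀ a b c : S,
    bracket a (bracket b c) + bracket b (bracket c a) + bracket c (bracket a b) = 0
  leibniz : ∀ a b c : S, bracket a (b * c) = bracket a b * c + b * bracket a c

section PoissonAux

variable {k : Type*} {S : Type*} [CommRing k] [CommRing S] [Algebra k S]

/-- The bracket with fixed right argument, as an additive monoid hom. -/
def PoissonBracket.bracketHom (P : PoissonBracket k S) (s : S) : S →+ S :=
  AddMonoidHom.mk' (fun a => P.bracket a s) (fun a b => P.add_left a b s)

lemma PoissonBracket.bracket_mul_left (P : PoissonBracket k S) (a b s : S) :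
    P.bracket (a * b) s = P.bracket a s * b + a * P.bracket b s := by
  rw [P.antisymm (a * b) s, P.leibniz s a b, P.antisymm a s, P.antisymm b s]
  ring

lemma PoissonBracket.central_mul (P : PoissonBracket k S) {a b : S}
    (ha : ∀ s, P.bracket a s = 0) (hb : ∀ s, P.bracket b s = 0) :
    ∀ s, P.bracket (a * b) s = 0 := fun s => by
  rw [P.bracket_mul_left a b s, ha s, hb s]
  ring

lemma PoissonBracket.central_one (P : PoissonBracket k S) :
    ∀ s : S, P.bracket 1 s = 0 := by
  intro s
  have h := P.bracket_mul_left 1 1 s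
  simp only [one_mul, mul_one] at h
  exact add_eq_left.mp h.symm

end PoissonAux

section PoissonAux2

variable {k : Type*} {S : Type*} [CommRing k] [CommRing S] [Algebra k S]

lemma PoissonBracket.central_pow (P : PoissonBracket k S) {a : S}
    (ha : ∀ s, P.bracket a s = 0) (p : ℕ) : ∀ s, P.bracket (a ^ p) s = 0 := by
  induction p with
  | zero => simpa using P.central_one
  | succ p ih =>
      intro s
      rw [pow_succ]
      exact P.central_mul ih ha s

lemma PoissonBracket.central_monomial (P : PoissonBracket k S) {n : ℕ} {f : Fin n → S}
    (hcent : ∀ (i : Fin n) (s : S), P.bracket (f i) s = 0) (m : Fin n → ℕ) :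
    ∀ s : S, P.bracket (∏ i, f i ^ m i) s = 0 := by
  refine Finset.prod_induction (fun i => f i ^ m i) (fun x => ∀ s, P.bracket x s = 0)
    (fun a b ha hb => P.central_mul ha hb) P.central_one ?_
  intro i _
  exact P.central_pow (hcent i) (m i)

lemma PoissonBracket.bracket_sum_mul (P : PoissonBracket k S) {n : ℕ} {f : Fin n → S}
    (hcent : ∀ (i : Fin n) (s : S), P.bracket (f i) s = 0) (N : ℕ)
    (u : (Fin n → ℕ) → S) (s : S) :
    P.bracket (∑ mm ∈ Finset.Nat.antidiagonalTuple n N, u mm * ∏ i, f i ^ mm i) s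
      = ∑ mm ∈ Finset.Nat.antidiagonalTuple n N, P.bracket (u mm) s * ∏ i, f i ^ mm i := by
  have e : P.bracket (∑ mm ∈ Finset.Nat.antidiagonalTuple n N, u mm * ∏ i, f i ^ mm i) s
      = (P.bracketHom s) (∑ mm ∈ Finset.Nat.antidiagonalTuple n N, u mm * ∏ i, f i ^ mm i) := rfl
  rw [e, map_sum]
  apply Finset.sum_congr rfl
  intro mm _
  show P.bracket (u mm * ∏ i, f i ^ mm i) s = _
  rw [P.bracket_mul_left, P.central_monomial hcent mm s]
  ring

end PoissonAux2

/-- Let `S` be a commutative Poisson algebra over a field and `f₁, …, fₙ` Poisson central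
elements forming a regular sequence, generating the ideal `I`.  Then `I^k/I^(k+1)` is a
free `S/I`-module with basis the monomials `f₁^{m₁} ⋯ fₙ^{mₙ}` of total degree `k` (as a
Poisson module it decomposes as the direct sum of the corresponding copies of `S/I`), and
for any Poisson central `h ∈ I^k`, each coefficient of its image in `I^k/I^(k+1)` with
respect to this basis is Poisson central in `S/I`. -/
theorem poisson_coefficients_central {k : Type*} [Field k]
    {S : Type*} [CommRing S] [Algebra k S]
    (P : PoissonBracket k S) (n : ℕ) (f : Fin n → S)
    (hreg : RingTheory.Sequence.IsRegular S (List.ofFn f))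
    (hcent : ∀ (i : Fin n) (s : S), P.bracket (f i) s = 0) (K : ℕ) :
    -- `I^k/I^(k+1)` decomposes with basis the degree `k` monomials in the `fᵢ`:
    -- they span `I^k` modulo `I^(k+1)` …
    (∀ x ∈ (Ideal.span (Set.range f)) ^ K, ∃ c : (Fin n → ℕ) → S,
        x - ∑ m ∈ Finset.Nat.antidiagonalTuple n K, c m * ∏ i, f i ^ m i ∈
          (Ideal.span (Set.range f)) ^ (K + 1)) ∧
    -- … and are linearly independent over `S/I`
    (∀ c : (Fin n → ℕ) → S,
        (∑ m ∈ Finset.Nat.antidiagonalTuple n K, c m * ∏ i, f i ^ m i) ∈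
            (Ideal.span (Set.range f)) ^ (K + 1) →
        ∀ m ∈ Finset.Nat.antidiagonalTuple n K, c m ∈ Ideal.span (Set.range f)) ∧
    -- coefficients of a Poisson central element of `I^K` are Poisson central in `S/I`
    (∀ h ∈ (Ideal.span (Set.range f)) ^ K, (∀ s : S, P.bracket h s = 0) →
      ∀ c : (Fin n → ℕ) → S,
        h - ∑ m ∈ Finset.Nat.antidiagonalTuple n K, c m * ∏ i, f i ^ m i ∈
            (Ideal.span (Set.range f)) ^ (K + 1) →
        ∀ m ∈ Finset.Nat.antidiagonalTuple n K, ∀ s : S,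
          P.bracket (c m) s ∈ Ideal.span (Set.range f)) := by
  classical
  have hw : RingTheory.Sequence.IsWeaklyRegular S (List.ofFn f) := hreg.toIsWeaklyRegular
  refine ⟨?_, ?_, ?_⟩
  · intro x hx
    obtain ⟨c, hc⟩ := QuasiRegAux.pow_repr f hx
    refine ⟨c, ?_⟩
    rw [hc, sub_self]
    exact Submodule.zero_mem _
  · intro c hcmem m hm
    exact QuasiRegAux.quasiReg n f hw K c hcmem m hm
  · intro h hmem hcentral c hdiff m hm s
    obtain ⟨d, hdr⟩ := QuasiRegAux.pow_repr f hdiff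
    have hh : h = (∑ mm ∈ Finset.Nat.antidiagonalTuple n K, c mm * ∏ i, f i ^ mm i)
        + (h - ∑ mm ∈ Finset.Nat.antidiagonalTuple n K, c mm * ∏ i, f i ^ mm i) := by ring
    have hz : P.bracket h s = 0 := hcentral s
    rw [hh] at hz
    have hz2 : (P.bracketHom s) ((∑ mm ∈ Finset.Nat.antidiagonalTuple n K, c mm * ∏ i, f i ^ mm i)
        + (h - ∑ mm ∈ Finset.Nat.antidiagonalTuple n K, c mm * ∏ i, f i ^ mm i)) = 0 := hz
    rw [map_add] at hz2
    have e1 : (P.bracketHom s) (∑ mm ∈ Finset.Nat.antidiagonalTuple n K, c mm * ∏ i, f i ^ mm i)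
        = ∑ mm ∈ Finset.Nat.antidiagonalTuple n K, P.bracket (c mm) s * ∏ i, f i ^ mm i :=
      P.bracket_sum_mul hcent K c s
    have e2 : (P.bracketHom s) (h - ∑ mm ∈ Finset.Nat.antidiagonalTuple n K, c mm * ∏ i, f i ^ mm i)
        = ∑ mm ∈ Finset.Nat.antidiagonalTuple n (K+1), P.bracket (d mm) s * ∏ i, f i ^ mm i := by
      rw [show (h - ∑ mm ∈ Finset.Nat.antidiagonalTuple n K, c mm * ∏ i, f i ^ mm i)
        = ∑ mm ∈ Finset.Nat.antidiagonalTuple n (K+1), d mm * ∏ i, f i ^ mm i from hdr]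
      exact P.bracket_sum_mul hcent (K+1) d s
    rw [e1, e2] at hz2
    have hmem2 : (∑ mm ∈ Finset.Nat.antidiagonalTuple n K, P.bracket (c mm) s * ∏ i, f i ^ mm i)
        ∈ (Ideal.span (Set.range f)) ^ (K + 1) := by
      have : (∑ mm ∈ Finset.Nat.antidiagonalTuple n K, P.bracket (c mm) s * ∏ i, f i ^ mm i)
          = -(∑ mm ∈ Finset.Nat.antidiagonalTuple n (K+1), P.bracket (d mm) s * ∏ i, f i ^ mm i) :=
        eq_neg_of_add_eq_zero_left hz2
      rw [this]
      exact neg_mem (QuasiRegAux.sum_mem_pow f _)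
    exact QuasiRegAux.quasiReg n f hw K _ hmem2 m hm
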